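/- Let (X1,Y1) and (X2,Y2) be independent pairs of discrete random variables, where X1 and X2 take values in {0,1} and have the same marginal distribution P_X, and Y1, Y2 take values in finite sets. Let U1 = X1 ⊕ X2 (addition in F_2) and U2 = X2. Then for every α ≥ 0 with α ≠ 1, H_α(U2 | (Y1,Y2,U1)) ≤ min{ H_α(X1|Y1), H_α(X2|Y2) }. -/

import Mathlib

/-- `rpow0 a α = a ^ α` (real power) with the convention `0 ^ 0 = 0`,
so that at `α = 0` sums of `rpow0` count support sizes. -/
noncomputable def rpow0 (a α : ℝ) : ℝ := if a = 0 then 0 else a ^ α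

lemma rpow0_nonneg {a : ℝ} (ha : 0 ≤ a) (α : ℝ) : 0 ≤ rpow0 a α := by
  unfold rpow0; split
  · exact le_refl 0
  · exact Real.rpow_nonneg ha α

lemma rpow0_pos {a : ℝ} (ha : 0 < a) (α : ℝ) : 0 < rpow0 a α := by
  unfold rpow0; rw [if_neg ha.ne']; exact Real.rpow_pos_of_pos ha α

lemma rpow0_eq_rpow {a α : ℝ} (hα : α ≠ 0) : rpow0 a α = a ^ α := by
  unfold rpow0; split
  · rename_i h; rw [h, Real.zero_rpow hα]
  · rfl

lemma rpow0_mul {a b : ℝ} (ha : 0 ≤ a) (hb : 0 ≤ b) (α : ℝ) :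
    rpow0 (a * b) α = rpow0 a α * rpow0 b α := by
  rcases eq_or_lt_of_le ha with rfl | ha'
  · simp [rpow0]
  rcases eq_or_lt_of_le hb with rfl | hb'
  · simp [rpow0]
  unfold rpow0
  rw [if_neg (by positivity), if_neg ha'.ne', if_neg hb'.ne',
    Real.mul_rpow ha hb]

/-- Two-point majorization inequality, concave case `0 ≤ α ≤ 1`. -/
lemma concave2 {α : ℝ} (hα0 : 0 ≤ α) (hα1 : α ≤ 1) {m M x y : ℝ}
    (hm : 0 ≤ m) (hmx : m ≤ x) (hmy : m ≤ y) (hxM : x ≤ M)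
    (hsum : x + y = m + M) :
    rpow0 m α + rpow0 M α ≤ rpow0 x α + rpow0 y α := by
  have hx : 0 ≤ x := hm.trans hmx
  have hy : 0 ≤ y := hm.trans hmy
  have hyM : y ≤ M := by linarith
  have hM : 0 ≤ M := hx.trans hxM
  rcases eq_or_lt_of_le hα0 with rfl | hαpos
  · -- α = 0 : rpow0 t 0 = if t = 0 then 0 else 1
    have f0 : ∀ t : ℝ, rpow0 t 0 = if t = 0 then 0 else 1 := by
      intro t; unfold rpow0; split <;> simp_all [Real.rpow_zero]
    rw [f0, f0, f0, f0]
    rcases eq_or_lt_of_le hm with rfl | hm'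
    · rcases eq_or_lt_of_le hM with rfl | hM'
      · have hx0 : x = 0 := le_antisymm hxM hmx
        have hy0 : y = 0 := le_antisymm hyM hmy
        simp [hx0, hy0]
      · have : x ≠ 0 ∨ y ≠ 0 := by
          by_contra h; push_neg at h; rw [h.1, h.2] at hsum; linarith
        rcases this with h | h
        · rw [if_pos rfl, if_neg hM'.ne', if_neg h]
          split <;> norm_num
        · rw [if_pos rfl, if_neg hM'.ne', if_neg h]
          split <;> norm_num
    · have hM' : 0 < M := hm'.trans_le (hmx.trans hxM)
      rw [if_neg hm'.ne', if_neg hM'.ne', if_neg (hm'.trans_le hmx).ne',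
        if_neg (hm'.trans_le hmy).ne']
  · -- 0 < α
    rw [rpow0_eq_rpow hαpos.ne', rpow0_eq_rpow hαpos.ne',
      rpow0_eq_rpow hαpos.ne', rpow0_eq_rpow hαpos.ne']
    rcases eq_or_lt_of_le (hmx.trans hxM) with heq | hlt
    · -- m = M forces x = m, y = m
      have hx0 : x = m := le_antisymm (hxM.trans heq.symm.le) hmx
      have hy0 : y = m := by linarith
      rw [hx0, hy0, ← heq]
    · have hMm : 0 < M - m := by linarith
      have hcc := Real.concaveOn_rpow hα0 hα1
      have h1 := hcc.2 (Set.mem_Ici.2 hm) (Set.mem_Ici.2 hM)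
        (show (0:ℝ) ≤ (M - x) / (M - m) from div_nonneg (by linarith) hMm.le)
        (show (0:ℝ) ≤ (x - m) / (M - m) from div_nonneg (by linarith) hMm.le)
        (by field_simp; ring)
      have h2 := hcc.2 (Set.mem_Ici.2 hm) (Set.mem_Ici.2 hM)
        (show (0:ℝ) ≤ (M - y) / (M - m) from div_nonneg (by linarith) hMm.le)
        (show (0:ℝ) ≤ (y - m) / (M - m) from div_nonneg (by linarith) hMm.le)
        (by field_simp; ring)
      simp only [smul_eq_mul] at h1 h2
      have ex : (M - x) / (M - m) * m + (x - m) / (M - m) * M = x := by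
        field_simp; ring
      have ey : (M - y) / (M - m) * m + (y - m) / (M - m) * M = y := by
        field_simp; ring
      rw [ex] at h1; rw [ey] at h2
      have htt : (M - x) / (M - m) + (M - y) / (M - m) = 1 := by
        rw [← add_div, div_eq_one_iff_eq hMm.ne']; linarith
      have hss : (x - m) / (M - m) + (y - m) / (M - m) = 1 := by
        rw [← add_div, div_eq_one_iff_eq hMm.ne']; linarith
      nlinarith [h1, h2, Real.rpow_nonneg hm α, Real.rpow_nonneg hM α]

/-- Two-point majorization inequality, convex case `1 ≤ α`. -/
lemma convex2 {α : ℝ} (hα : 1 ≤ α) {m M x y : ℝ}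
    (hm : 0 ≤ m) (hmx : m ≤ x) (hmy : m ≤ y) (hxM : x ≤ M)
    (hsum : x + y = m + M) :
    rpow0 x α + rpow0 y α ≤ rpow0 m α + rpow0 M α := by
  have hx : 0 ≤ x := hm.trans hmx
  have hy : 0 ≤ y := hm.trans hmy
  have hyM : y ≤ M := by linarith
  have hM : 0 ≤ M := hx.trans hxM
  have hαpos : (0:ℝ) < α := lt_of_lt_of_le one_pos hα
  rw [rpow0_eq_rpow hαpos.ne', rpow0_eq_rpow hαpos.ne',
    rpow0_eq_rpow hαpos.ne', rpow0_eq_rpow hαpos.ne']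
  rcases eq_or_lt_of_le (hmx.trans hxM) with heq | hlt
  · have hx0 : x = m := le_antisymm (hxM.trans heq.symm.le) hmx
    have hy0 : y = m := by linarith
    rw [hx0, hy0, ← heq]
  · have hMm : 0 < M - m := by linarith
    have hcc := convexOn_rpow hα
    have h1 := hcc.2 (Set.mem_Ici.2 hm) (Set.mem_Ici.2 hM)
      (show (0:ℝ) ≤ (M - x) / (M - m) from div_nonneg (by linarith) hMm.le)
      (show (0:ℝ) ≤ (x - m) / (M - m) from div_nonneg (by linarith) hMm.le)
      (by field_simp; ring)
    have h2 := hcc.2 (Set.mem_Ici.2 hm) (Set.mem_Ici.2 hM)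
      (show (0:ℝ) ≤ (M - y) / (M - m) from div_nonneg (by linarith) hMm.le)
      (show (0:ℝ) ≤ (y - m) / (M - m) from div_nonneg (by linarith) hMm.le)
      (by field_simp; ring)
    simp only [smul_eq_mul] at h1 h2
    have ex : (M - x) / (M - m) * m + (x - m) / (M - m) * M = x := by
      field_simp; ring
    have ey : (M - y) / (M - m) * m + (y - m) / (M - m) * M = y := by
      field_simp; ring
    rw [ex] at h1; rw [ey] at h2
    have htt : (M - x) / (M - m) + (M - y) / (M - m) = 1 := by
      rw [← add_div, div_eq_one_iff_eq hMm.ne']; linarith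
    have hss : (x - m) / (M - m) + (y - m) / (M - m) = 1 := by
      rw [← add_div, div_eq_one_iff_eq hMm.ne']; linarith
    nlinarith [h1, h2, Real.rpow_nonneg hm α, Real.rpow_nonneg hM α]

/-- Key pointwise inequality, case `a ≤ b`, concave regime. -/
lemma key_le_aux {α a b c d : ℝ} (hα0 : 0 ≤ α) (hα1 : α ≤ 1)
    (ha : 0 ≤ a) (hab : a ≤ b) (hc : 0 ≤ c) (hd : 0 ≤ d) :
    rpow0 (a * (c + d)) α + rpow0 (b * (c + d)) α ≤
      rpow0 (a * c + b * d) α + rpow0 (a * d + b * c) α :=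
  concave2 hα0 hα1 (by positivity) (by nlinarith) (by nlinarith)
    (by nlinarith) (by ring)

lemma key_le {α a b c d : ℝ} (hα0 : 0 ≤ α) (hα1 : α ≤ 1)
    (ha : 0 ≤ a) (hb : 0 ≤ b) (hc : 0 ≤ c) (hd : 0 ≤ d) :
    rpow0 (a * (c + d)) α + rpow0 (b * (c + d)) α ≤
      rpow0 (a * c + b * d) α + rpow0 (a * d + b * c) α := by
  rcases le_total a b with h | h
  · exact key_le_aux hα0 hα1 ha h hc hd
  · have := key_le_aux hα0 hα1 hb h hc hd
    have e1 : b * c + a * d = a * d + b * c := by ring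
    have e2 : b * d + a * c = a * c + b * d := by ring
    rw [e1, e2] at this; linarith

lemma key_ge_aux {α a b c d : ℝ} (hα1 : 1 ≤ α)
    (ha : 0 ≤ a) (hab : a ≤ b) (hc : 0 ≤ c) (hd : 0 ≤ d) :
    rpow0 (a * c + b * d) α + rpow0 (a * d + b * c) α ≤
      rpow0 (a * (c + d)) α + rpow0 (b * (c + d)) α :=
  convex2 hα1 (by positivity) (by nlinarith) (by nlinarith)
    (by nlinarith) (by ring)

lemma key_ge {α a b c d : ℝ} (hα1 : 1 ≤ α)
    (ha : 0 ≤ a) (hb : 0 ≤ b) (hc : 0 ≤ c) (hd : 0 ≤ d) :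
    rpow0 (a * c + b * d) α + rpow0 (a * d + b * c) α ≤
      rpow0 (a * (c + d)) α + rpow0 (b * (c + d)) α := by
  rcases le_total a b with h | h
  · exact key_ge_aux hα1 ha h hc hd
  · have := key_ge_aux hα1 hb h hc hd
    have e1 : b * c + a * d = a * d + b * c := by ring
    have e2 : b * d + a * c = a * c + b * d := by ring
    rw [e1, e2] at this; linarith

lemma sum_zmod2 {M : Type*} [AddCommMonoid M] (g : ZMod 2 → M) :
    ∑ x, g x = g 0 + g 1 := by
  rw [show (Finset.univ : Finset (ZMod 2)) = {0, 1} by decide]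
  rw [Finset.sum_insert (by decide), Finset.sum_singleton]

lemma zmod2_add_add (a b : ZMod 2) : a + b + b = a := by revert a b; decide

lemma z11 : (1 : ZMod 2) + 1 = 0 := by decide

lemma logdiv_le {α Nq Dq N1 D1 : ℝ} (hNq : 0 < Nq) (hDq : 0 < Dq)
    (hN1 : 0 < N1) (hD1 : 0 < D1)
    (h₁ : α < 1 → Nq * D1 ≤ N1 * Dq) (h₂ : 1 < α → N1 * Dq ≤ Nq * D1)
    (hα1 : α ≠ 1) :
    (1 - α)⁻¹ * Real.logb 2 (Nq / Dq) ≤ (1 - α)⁻¹ * Real.logb 2 (N1 / D1) := by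
  rcases hα1.lt_or_gt with h | h
  · have hpos : (0:ℝ) ≤ (1 - α)⁻¹ := by
      have : (0:ℝ) < 1 - α := by linarith
      positivity
    refine mul_le_mul_of_nonneg_left ?_ hpos
    refine Real.logb_le_logb_of_le (by norm_num) (by positivity) ?_
    rw [div_le_div_iff₀ hDq hD1]; exact h₁ h
  · have hneg : (1 - α)⁻¹ ≤ 0 := by
      have : 1 - α < 0 := by linarith
      exact (inv_nonpos).2 this.le
    refine mul_le_mul_of_nonpos_left ?_ hneg
    refine Real.logb_le_logb_of_le (by norm_num) (by positivity) ?_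
    rw [div_le_div_iff₀ hD1 hDq]; exact h₂ h

def polarEquiv (Y1 Y2 : Type*) :
    ZMod 2 × (Y1 × Y2 × ZMod 2) ≃ (ZMod 2 × Y1) × (ZMod 2 × Y2) where
  toFun z := ((z.2.2.2 + z.1, z.2.1), (z.1, z.2.2.1))
  invFun w := (w.2.1, (w.1.2, w.2.2, w.1.1 + w.2.1))
  left_inv z := by
    obtain ⟨u2, y1, y2, u1⟩ := z
    simp [zmod2_add_add]
  right_inv w := by
    obtain ⟨⟨x1, y1⟩, x2, y2⟩ := w
    simp [zmod2_add_add]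

/-- Conditional Rényi entropy of order `α` (base-2 logarithm) of a joint
distribution `p` on `X × Y`:
`H_α(X|Y) = (1/(1-α)) * log₂ ((Σ_{x,y} p(x,y)^α) / (Σ_y P_Y(y)^α))`. -/
noncomputable def condRenyi {X Y : Type*} [Fintype X] [Fintype Y]
    (α : ℝ) (p : X × Y → ℝ) : ℝ :=
  (1 - α)⁻¹ * Real.logb 2
    ((∑ z : X × Y, rpow0 (p z) α) / (∑ y : Y, rpow0 (∑ x : X, p (x, y)) α))

/-- for the basic polar transform `U1 = X1 ⊕ X2`, `U2 = X2` applied to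
independent pairs `(X1,Y1)`, `(X2,Y2)` with the same input marginal `P_X`,
`H_α(U2 | (Y1,Y2,U1)) ≤ min (H_α(X1|Y1)) (H_α(X2|Y2))` for all `α ≥ 0`, `α ≠ 1`.
The joint distribution of `(U2,(Y1,Y2,U1))` is
`(u2,(y1,y2,u1)) ↦ p1(u1+u2, y1) * p2(u2, y2)`. -/
theorem renyi_polar_minus
    {Y1 Y2 : Type*} [Fintype Y1] [Fintype Y2]
    (p1 : ZMod 2 × Y1 → ℝ) (p2 : ZMod 2 × Y2 → ℝ)
    (h1 : ∀ z, 0 ≤ p1 z) (h2 : ∀ z, 0 ≤ p2 z)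
    (hs1 : ∑ z, p1 z = 1) (hs2 : ∑ z, p2 z = 1)
    (hmarg : ∀ x : ZMod 2, ∑ y1, p1 (x, y1) = ∑ y2, p2 (x, y2))
    (α : ℝ) (hα0 : 0 ≤ α) (hα1 : α ≠ 1) :
    condRenyi α (fun z : ZMod 2 × (Y1 × Y2 × ZMod 2) =>
        p1 (z.2.2.2 + z.1, z.2.1) * p2 (z.1, z.2.2.1))
      ≤ min (condRenyi α p1) (condRenyi α p2) := by
  -- abbreviations
  set N1 : ℝ := ∑ z : ZMod 2 × Y1, rpow0 (p1 z) α with hN1def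
  set N2 : ℝ := ∑ z : ZMod 2 × Y2, rpow0 (p2 z) α with hN2def
  set D1 : ℝ := ∑ y1 : Y1, rpow0 (∑ x : ZMod 2, p1 (x, y1)) α with hD1def
  set D2 : ℝ := ∑ y2 : Y2, rpow0 (∑ x : ZMod 2, p2 (x, y2)) α with hD2def
  set Nq : ℝ := ∑ z : ZMod 2 × (Y1 × Y2 × ZMod 2),
      rpow0 (p1 (z.2.2.2 + z.1, z.2.1) * p2 (z.1, z.2.2.1)) α with hNqdef
  set Dq : ℝ := ∑ v : Y1 × Y2 × ZMod 2,
      rpow0 (∑ x : ZMod 2, p1 (v.2.2 + x, v.1) * p2 (x, v.2.1)) α with hDqdef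

  -- positivity witnesses
  obtain ⟨z1, hz1⟩ : ∃ z, 0 < p1 z := by
    by_contra h; push_neg at h
    have h0 : ∑ z, p1 z = 0 :=
      Finset.sum_eq_zero fun z _ => le_antisymm (h z) (h1 z)
    rw [hs1] at h0; norm_num at h0
  obtain ⟨z2, hz2⟩ : ∃ z, 0 < p2 z := by
    by_contra h; push_neg at h
    have h0 : ∑ z, p2 z = 0 :=
      Finset.sum_eq_zero fun z _ => le_antisymm (h z) (h2 z)
    rw [hs2] at h0; norm_num at h0
  have hN1pos : 0 < N1 := Finset.sum_pos' (fun z _ => rpow0_nonneg (h1 z) α)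
    ⟨z1, Finset.mem_univ _, rpow0_pos hz1 α⟩
  have hN2pos : 0 < N2 := Finset.sum_pos' (fun z _ => rpow0_nonneg (h2 z) α)
    ⟨z2, Finset.mem_univ _, rpow0_pos hz2 α⟩
  have hD1pos : 0 < D1 := by
    refine Finset.sum_pos'
      (fun y _ => rpow0_nonneg (Finset.sum_nonneg fun x _ => h1 _) α)
      ⟨z1.2, Finset.mem_univ _, rpow0_pos ?_ α⟩
    calc (0:ℝ) < p1 (z1.1, z1.2) := by simpa using hz1
      _ ≤ ∑ x : ZMod 2, p1 (x, z1.2) :=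
        Finset.single_le_sum (f := fun x => p1 (x, z1.2)) (fun i _ => h1 _)
          (Finset.mem_univ z1.1)
  have hD2pos : 0 < D2 := by
    refine Finset.sum_pos'
      (fun y _ => rpow0_nonneg (Finset.sum_nonneg fun x _ => h2 _) α)
      ⟨z2.2, Finset.mem_univ _, rpow0_pos ?_ α⟩
    calc (0:ℝ) < p2 (z2.1, z2.2) := by simpa using hz2
      _ ≤ ∑ x : ZMod 2, p2 (x, z2.2) :=
        Finset.single_le_sum (f := fun x => p2 (x, z2.2)) (fun i _ => h2 _)
          (Finset.mem_univ z2.1)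
  have hDqpos : 0 < Dq := by
    refine Finset.sum_pos'
      (fun v _ => rpow0_nonneg
        (Finset.sum_nonneg fun x _ => mul_nonneg (h1 _) (h2 _)) α)
      ⟨(z1.2, z2.2, z1.1 + z2.1), Finset.mem_univ _, rpow0_pos ?_ α⟩
    calc (0:ℝ) < p1 (z1.1 + z2.1 + z2.1, z1.2) * p2 (z2.1, z2.2) := by
          rw [zmod2_add_add]
          have : 0 < p1 (z1.1, z1.2) := by simpa using hz1
          have : 0 < p2 (z2.1, z2.2) := by simpa using hz2
          positivity
      _ ≤ ∑ x : ZMod 2, p1 (z1.1 + z2.1 + x, z1.2) * p2 (x, z2.2) :=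
        Finset.single_le_sum (f := fun x => p1 (z1.1 + z2.1 + x, z1.2) * p2 (x, z2.2))
          (fun x _ => mul_nonneg (h1 _) (h2 _)) (Finset.mem_univ z2.1)
  -- product identity for the numerator
  have hstep : (∑ z : ZMod 2 × (Y1 × Y2 × ZMod 2),
        rpow0 (p1 (z.2.2.2 + z.1, z.2.1) * p2 (z.1, z.2.2.1)) α)
      = ∑ w : (ZMod 2 × Y1) × (ZMod 2 × Y2), rpow0 (p1 w.1 * p2 w.2) α :=
    Fintype.sum_equiv (polarEquiv Y1 Y2) _ _ (fun z => rfl)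
  have hNq : Nq = N1 * N2 := by
    rw [hNqdef, hstep]
    rw [Fintype.sum_prod_type, hN1def, hN2def, Finset.sum_mul_sum]
    exact Finset.sum_congr rfl fun w1 _ => Finset.sum_congr rfl fun w2 _ =>
      rpow0_mul (h1 _) (h2 _) α
  -- expansions over ZMod 2
  have hN1e : N1 = ∑ y1 : Y1, (rpow0 (p1 (0, y1)) α + rpow0 (p1 (1, y1)) α) := by
    rw [hN1def, Fintype.sum_prod_type,
      sum_zmod2 (fun x => ∑ y1 : Y1, rpow0 (p1 (x, y1)) α),
      ← Finset.sum_add_distrib]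
  have hN2e : N2 = ∑ y2 : Y2, (rpow0 (p2 (0, y2)) α + rpow0 (p2 (1, y2)) α) := by
    rw [hN2def, Fintype.sum_prod_type,
      sum_zmod2 (fun x => ∑ y2 : Y2, rpow0 (p2 (x, y2)) α),
      ← Finset.sum_add_distrib]
  have hD1e : D1 = ∑ y1 : Y1, rpow0 (p1 (0, y1) + p1 (1, y1)) α := by
    rw [hD1def]
    exact Finset.sum_congr rfl fun y1 _ => by
      rw [sum_zmod2 (fun x => p1 (x, y1))]
  have hD2e : D2 = ∑ y2 : Y2, rpow0 (p2 (0, y2) + p2 (1, y2)) α := by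
    rw [hD2def]
    exact Finset.sum_congr rfl fun y2 _ => by
      rw [sum_zmod2 (fun x => p2 (x, y2))]
  have hDqe : Dq = ∑ y1 : Y1, ∑ y2 : Y2,
      (rpow0 (p1 (0, y1) * p2 (0, y2) + p1 (1, y1) * p2 (1, y2)) α
        + rpow0 (p1 (1, y1) * p2 (0, y2) + p1 (0, y1) * p2 (1, y2)) α) := by
    rw [hDqdef, Fintype.sum_prod_type]
    refine Finset.sum_congr rfl fun y1 _ => ?_
    rw [Fintype.sum_prod_type]
    refine Finset.sum_congr rfl fun y2 _ => ?_
    rw [sum_zmod2 (fun u1 => rpow0 (∑ x : ZMod 2, p1 (u1 + x, y1) * p2 (x, y2)) α),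
      sum_zmod2 (fun x => p1 ((0 : ZMod 2) + x, y1) * p2 (x, y2)),
      sum_zmod2 (fun x => p1 ((1 : ZMod 2) + x, y1) * p2 (x, y2))]
    simp only [zero_add, add_zero, z11]
  -- product sums as double sums
  have hND1 : N2 * D1 = ∑ y1 : Y1, ∑ y2 : Y2,
      (rpow0 (p2 (0, y2)) α + rpow0 (p2 (1, y2)) α)
        * rpow0 (p1 (0, y1) + p1 (1, y1)) α := by
    rw [hN2e, hD1e, Finset.sum_mul_sum]
    exact Finset.sum_comm
  have hND2 : N1 * D2 = ∑ y1 : Y1, ∑ y2 : Y2,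
      (rpow0 (p1 (0, y1)) α + rpow0 (p1 (1, y1)) α)
        * rpow0 (p2 (0, y2) + p2 (1, y2)) α := by
    rw [hN1e, hD2e, Finset.sum_mul_sum]
  have hsplit1 : ∀ (y1 : Y1) (y2 : Y2),
      (rpow0 (p2 (0, y2)) α + rpow0 (p2 (1, y2)) α)
        * rpow0 (p1 (0, y1) + p1 (1, y1)) α
      = rpow0 (p2 (0, y2) * (p1 (0, y1) + p1 (1, y1))) α
        + rpow0 (p2 (1, y2) * (p1 (0, y1) + p1 (1, y1))) α := by
    intro y1 y2
    rw [add_mul, rpow0_mul (h2 _) (add_nonneg (h1 _) (h1 _)),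
      rpow0_mul (h2 _) (add_nonneg (h1 _) (h1 _))]
  have hsplit2 : ∀ (y1 : Y1) (y2 : Y2),
      (rpow0 (p1 (0, y1)) α + rpow0 (p1 (1, y1)) α)
        * rpow0 (p2 (0, y2) + p2 (1, y2)) α
      = rpow0 (p1 (0, y1) * (p2 (0, y2) + p2 (1, y2))) α
        + rpow0 (p1 (1, y1) * (p2 (0, y2) + p2 (1, y2))) α := by
    intro y1 y2
    rw [add_mul, rpow0_mul (h1 _) (add_nonneg (h2 _) (h2 _)),
      rpow0_mul (h1 _) (add_nonneg (h2 _) (h2 _))]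
  -- the four comparison bounds
  have hb1 : α < 1 → N2 * D1 ≤ Dq := by
    intro h
    rw [hND1, hDqe]
    refine Finset.sum_le_sum fun y1 _ => Finset.sum_le_sum fun y2 _ => ?_
    rw [hsplit1 y1 y2]
    have hk := key_le (α := α) hα0 h.le (h2 (0, y2)) (h2 (1, y2))
      (h1 (0, y1)) (h1 (1, y1))
    rw [show p2 (0, y2) * p1 (0, y1) + p2 (1, y2) * p1 (1, y1)
          = p1 (0, y1) * p2 (0, y2) + p1 (1, y1) * p2 (1, y2) from by ring,
      show p2 (0, y2) * p1 (1, y1) + p2 (1, y2) * p1 (0, y1)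
          = p1 (1, y1) * p2 (0, y2) + p1 (0, y1) * p2 (1, y2) from by ring] at hk
    exact hk
  have hb2 : α < 1 → N1 * D2 ≤ Dq := by
    intro h
    rw [hND2, hDqe]
    refine Finset.sum_le_sum fun y1 _ => Finset.sum_le_sum fun y2 _ => ?_
    rw [hsplit2 y1 y2]
    have hk := key_le (α := α) hα0 h.le (h1 (0, y1)) (h1 (1, y1))
      (h2 (0, y2)) (h2 (1, y2))
    rw [show p1 (0, y1) * p2 (1, y2) + p1 (1, y1) * p2 (0, y2)
          = p1 (1, y1) * p2 (0, y2) + p1 (0, y1) * p2 (1, y2) from by ring] at hk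
    exact hk
  have hb1' : 1 < α → Dq ≤ N2 * D1 := by
    intro h
    rw [hND1, hDqe]
    refine Finset.sum_le_sum fun y1 _ => Finset.sum_le_sum fun y2 _ => ?_
    rw [hsplit1 y1 y2]
    have hk := key_ge (α := α) h.le (h2 (0, y2)) (h2 (1, y2))
      (h1 (0, y1)) (h1 (1, y1))
    rw [show p2 (0, y2) * p1 (0, y1) + p2 (1, y2) * p1 (1, y1)
          = p1 (0, y1) * p2 (0, y2) + p1 (1, y1) * p2 (1, y2) from by ring,
      show p2 (0, y2) * p1 (1, y1) + p2 (1, y2) * p1 (0, y1)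
          = p1 (1, y1) * p2 (0, y2) + p1 (0, y1) * p2 (1, y2) from by ring] at hk
    exact hk
  have hb2' : 1 < α → Dq ≤ N1 * D2 := by
    intro h
    rw [hND2, hDqe]
    refine Finset.sum_le_sum fun y1 _ => Finset.sum_le_sum fun y2 _ => ?_
    rw [hsplit2 y1 y2]
    have hk := key_ge (α := α) h.le (h1 (0, y1)) (h1 (1, y1))
      (h2 (0, y2)) (h2 (1, y2))
    rw [show p1 (0, y1) * p2 (1, y2) + p1 (1, y1) * p2 (0, y2)
          = p1 (1, y1) * p2 (0, y2) + p1 (0, y1) * p2 (1, y2) from by ring] at hk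
    exact hk
  have hNqpos : 0 < Nq := by rw [hNq]; exact mul_pos hN1pos hN2pos
  clear_value N1 N2 D1 D2 Nq Dq
  -- final comparison
  refine le_min ?_ ?_
  · show condRenyi α _ ≤ condRenyi α p1
    simp only [condRenyi]
    rw [← hNqdef, ← hDqdef, ← hN1def, ← hD1def]
    refine logdiv_le hNqpos hDqpos hN1pos hD1pos (fun h => ?_) (fun h => ?_) hα1
    · rw [hNq]
      calc N1 * N2 * D1 = N1 * (N2 * D1) := by ring
        _ ≤ N1 * Dq := mul_le_mul_of_nonneg_left (hb1 h) hN1pos.le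
    · rw [hNq]
      calc N1 * Dq ≤ N1 * (N2 * D1) :=
            mul_le_mul_of_nonneg_left (hb1' h) hN1pos.le
        _ = N1 * N2 * D1 := by ring
  · show condRenyi α _ ≤ condRenyi α p2
    simp only [condRenyi]
    rw [← hNqdef, ← hDqdef, ← hN2def, ← hD2def]
    refine logdiv_le hNqpos hDqpos hN2pos hD2pos (fun h => ?_) (fun h => ?_) hα1
    · rw [hNq]
      calc N1 * N2 * D2 = N2 * (N1 * D2) := by ring
        _ ≤ N2 * Dq := mul_le_mul_of_nonneg_left (hb2 h) hN2pos.le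
    · rw [hNq]
      calc N2 * Dq ≤ N2 * (N1 * D2) :=
            mul_le_mul_of_nonneg_left (hb2' h) hN2pos.le
        _ = N1 * N2 * D2 := by ring
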